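/- Let G = ⟨s₁,...,s_r⟩ be the free group of rank r, K a finite set, κ a probability measure on K, and α the Bernoulli partition of (K^G, κ^G). Then for every k ≥ 0, F(α^k) = H(κ), where F(γ) = (1-2r)H(γ) + Σ_i H(γ ∨ s_iγ) and α^k = ⋁_{g∈B(e,k)} gα. Consequently f(G, K^G, κ^G) = H(κ). -/

import Mathlib

open MeasureTheory
open scoped ENNReal

namespace Bowen

/-- Shannon entropy of the (countable) partition of `X` into fibers of `α`. -/
noncomputable def entropy {X : Type*} [MeasurableSpace X] {ι : Type*} (μ : Measure X)
    (α : X → ι) : ℝ :=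
  ∑' i, Real.negMulLog (μ (α ⁻¹' {i})).toReal

/-- Word-metric ball of radius `n` for the generating set `S`. -/
def ballF {G : Type*} [Group G] [DecidableEq G] (S : Finset G) : ℕ → Finset G
  | 0 => {1}
  | n + 1 => ballF S n ∪ (S ×ˢ ballF S n).image (fun p => p.1 * p.2)

/-- The symmetric generating set `S = {s₁^{±1},…,s_r^{±1}}` of the rank `r` free group. -/
noncomputable def genS (r : ℕ) : Finset (FreeGroup (Fin r)) :=
  letI := Classical.decEq (FreeGroup (Fin r))
  (Finset.univ.image fun i : Fin r => FreeGroup.of i) ∪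
    (Finset.univ.image fun i : Fin r => (FreeGroup.of i)⁻¹)

/-- The word-metric ball `B(e,n)` in the rank `r` free group. -/
noncomputable def ballFree (r : ℕ) (n : ℕ) : Finset (FreeGroup (Fin r)) :=
  letI := Classical.decEq (FreeGroup (Fin r))
  ballF (genS r) n

/-- `B(e,k) ∪ s_i·B(e,k)`, indexing the atoms of `α^k ∨ s_iα^k`. -/
noncomputable def ballUnion (r : ℕ) (i : Fin r) (k : ℕ) : Finset (FreeGroup (Fin r)) :=
  letI := Classical.decEq (FreeGroup (Fin r))
  ballFree r k ∪ (ballFree r k).image (fun g => FreeGroup.of i * g)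

/-- `F(α^k) = (1-2r)H(α^k) + ∑ᵢ H(α^k ∨ s_iα^k)` for the Bernoulli partition
`α = {A_m}`, `A_m = {x | x(e) = m}`, of the Bernoulli shift over the rank `r` free group:
the atoms of `α^k = ⋁_{g ∈ B(e,k)} gα` are the fibers of `x ↦ (x(g))_{g ∈ B(e,k)}`, and
those of `α^k ∨ s_iα^k` are the fibers of `x ↦ (x(g))_{g ∈ B(e,k) ∪ s_iB(e,k)}`. -/
noncomputable def FBern (r : ℕ) {K : Type*} [MeasurableSpace K]
    (μ : Measure (FreeGroup (Fin r) → K)) (k : ℕ) : ℝ :=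
  (1 - 2 * (r : ℝ)) *
      entropy μ (fun x (g : {g // g ∈ ballFree r k}) => x g.1) +
    ∑ i : Fin r, entropy μ (fun x (g : {g // g ∈ ballUnion r i k}) => x g.1)

end Bowen

open Bowen

namespace BowenAux
open Bowen FreeGroup
open scoped Classical

section Words
variable {α : Type*} [DecidableEq α]

lemma reduce_tail {x : α × Bool} {L : List (α × Bool)}
    (h : reduce (x :: L) = x :: L) : reduce L = L := by
  rw [reduce.cons] at h
  rcases hL : reduce L with _ | ⟨hd, tl⟩ <;> rw [hL] at h
  · obtain ⟨-, h2⟩ := List.cons.injEq .. ▸ h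
    rw [← h2]
  · simp only [] at h
    split_ifs at h with hc
    · have h1 : (hd :: tl).length ≤ L.length := hL ▸ FreeGroup.Red.length_le reduce.red
      have h2 : tl.length = L.length + 1 := by
        have := congrArg List.length h; simpa using this
      simp [h2] at h1
    · obtain ⟨-, h2⟩ := List.cons.injEq .. ▸ h
      exact h2

lemma reduce_cons_of_head {x : α × Bool} {L : List (α × Bool)}
    (h : reduce L = L) (hh : ∀ y ∈ L.head?, ¬(x.1 = y.1 ∧ x.2 = !y.2)) :
    reduce (x :: L) = x :: L := by
  rw [reduce.cons, h]
  cases L with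
  | nil => rfl
  | cons hd tl =>
    have := hh hd (by simp)
    simp [this]

lemma reduced_no_cancel {x y : α × Bool} {t : List (α × Bool)}
    (h : reduce (x :: y :: t) = x :: y :: t) : ¬(x.1 = y.1 ∧ x.2 = !y.2) := by
  intro hc
  have ht : reduce (y :: t) = y :: t := reduce_tail h
  rw [reduce.cons, ht] at h
  simp only [hc, and_self, if_true] at h
  have := congrArg List.length h
  simp at this; omega

lemma toWord_cons {g : FreeGroup α} {x : α × Bool} {L : List (α × Bool)}
    (h : g.toWord = x :: L) :
    g = FreeGroup.mk [x] * FreeGroup.mk L ∧ (FreeGroup.mk L).toWord = L := by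
  have hred : reduce (x :: L) = x :: L := by rw [← h]; exact reduce_toWord g
  constructor
  · rw [FreeGroup.mul_mk]
    conv_lhs => rw [← FreeGroup.mk_toWord (x := g), h]
    norm_num
  · rw [FreeGroup.toWord_mk]; exact reduce_tail hred

lemma mk_single_true (a : α) : FreeGroup.mk [(a, true)] = FreeGroup.of a := rfl

lemma mk_single_false (a : α) : FreeGroup.mk [(a, false)] = (FreeGroup.of a)⁻¹ := by
  rw [← mk_single_true, FreeGroup.inv_mk]; rfl

end Words

variable {r : ℕ}

lemma mem_genS {s : FreeGroup (Fin r)} :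
    s ∈ genS r ↔ ∃ i : Fin r, s = FreeGroup.of i ∨ s = (FreeGroup.of i)⁻¹ := by
  simp only [genS, Finset.mem_union, Finset.mem_image, Finset.mem_univ, true_and]
  constructor
  · rintro (⟨i, hi⟩ | ⟨i, hi⟩) <;> exact ⟨i, by simp [hi.symm]⟩
  · rintro ⟨i, h | h⟩
    · exact Or.inl ⟨i, h.symm⟩
    · exact Or.inr ⟨i, h.symm⟩

lemma norm_genS {s : FreeGroup (Fin r)} (h : s ∈ genS r) : s.norm = 1 := by
  obtain ⟨i, h | h⟩ := mem_genS.1 h <;> subst h <;> simp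

lemma ballFree_eq (n : ℕ) : ballFree r n = ballF (genS r) n := by
  unfold ballFree
  congr 1
  exact Subsingleton.elim _ _

lemma mem_ballFree_succ {g : FreeGroup (Fin r)} {n : ℕ} :
    g ∈ ballFree r (n + 1) ↔
      g ∈ ballFree r n ∨ ∃ s ∈ genS r, ∃ h ∈ ballFree r n, g = s * h := by
  rw [ballFree_eq, ballFree_eq, ballF]
  simp only [Finset.mem_union, Finset.mem_image, Finset.mem_product, Prod.exists]
  constructor
  · rintro (h | ⟨a, b, ⟨ha, hb⟩, hab⟩)
    · exact Or.inl h
    · exact Or.inr ⟨a, ha, b, hb, hab.symm⟩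
  · rintro (h | ⟨s, hs, h, hh, rfl⟩)
    · exact Or.inl h
    · exact Or.inr ⟨s, h, ⟨hs, hh⟩, rfl⟩

lemma mem_ballFree {g : FreeGroup (Fin r)} {n : ℕ} :
    g ∈ ballFree r n ↔ g.norm ≤ n := by
  induction n generalizing g with
  | zero =>
    rw [ballFree_eq, ballF, Finset.mem_singleton, Nat.le_zero, ← FreeGroup.norm_eq_zero]
  | succ n ih =>
    rw [mem_ballFree_succ]
    constructor
    · rintro (h | ⟨s, hs, h, hh, rfl⟩)
      · exact (ih.1 h).trans (Nat.le_succ n)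
      · calc (s * h).norm ≤ s.norm + h.norm := FreeGroup.norm_mul_le s h
          _ ≤ 1 + n := by have := norm_genS hs; have := ih.1 hh; omega
          _ = n + 1 := by omega
    · intro hg
      by_cases hn : g.norm ≤ n
      · exact Or.inl (ih.2 hn)
      · rcases hW : g.toWord with _ | ⟨⟨i, b⟩, L⟩
        · exact absurd (by simp [FreeGroup.norm, hW]) hn
        · obtain ⟨hdec, hL⟩ := toWord_cons hW
          have hnormL : (FreeGroup.mk L).norm ≤ n := by
            have : g.norm = L.length + 1 := by simp [FreeGroup.norm, hW]
            have : (FreeGroup.mk L).norm = L.length := by simp [FreeGroup.norm, hL]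
            omega
          refine Or.inr ⟨FreeGroup.mk [(i, b)], ?_, FreeGroup.mk L, ih.2 hnormL, hdec⟩
          cases b
          · rw [mk_single_false]; exact mem_genS.2 ⟨i, Or.inr rfl⟩
          · rw [mk_single_true]; exact mem_genS.2 ⟨i, Or.inl rfl⟩

lemma one_mem_ballFree {n : ℕ} : (1 : FreeGroup (Fin r)) ∈ ballFree r n :=
  mem_ballFree.2 (by simp)


noncomputable def Pf (r k : ℕ) (i : Fin r) : Finset (FreeGroup (Fin r)) :=
  (ballFree r k).filter (fun g => g.toWord.head? = some (i, true))

noncomputable def Nf (r k : ℕ) (i : Fin r) : Finset (FreeGroup (Fin r)) :=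
  (ballFree r k).filter (fun g => g.toWord.head? = some (i, false))

lemma decomp_head {h : FreeGroup (Fin r)} {i : Fin r} {b : Bool} {L : List (Fin r × Bool)}
    (hW : h.toWord = (i, b) :: L) :
    h = (cond b (FreeGroup.of i) (FreeGroup.of i)⁻¹) * FreeGroup.mk L ∧
      (FreeGroup.mk L).toWord = L := by
  obtain ⟨h1, h2⟩ := toWord_cons hW
  refine ⟨?_, h2⟩
  cases b
  · rw [h1, mk_single_false]; rfl
  · rw [h1, mk_single_true]; rfl

lemma norm_toWord {h : FreeGroup (Fin r)} : h.norm = h.toWord.length := rfl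

lemma cons_noncancel {h : FreeGroup (Fin r)} {i : Fin r}
    (hp : h.toWord.head? ≠ some (i, true)) :
    ((FreeGroup.of i)⁻¹ * h).toWord = (i, false) :: h.toWord := by
  have h1 : (FreeGroup.of i)⁻¹ * h = FreeGroup.mk ((i, false) :: h.toWord) := by
    conv_lhs => rw [← FreeGroup.mk_toWord (x := h), ← mk_single_false, FreeGroup.mul_mk]
    rfl
  rw [h1, FreeGroup.toWord_mk]
  refine reduce_cons_of_head (FreeGroup.reduce_toWord h) ?_
  rintro y hy ⟨hc1, hc2⟩
  apply hp
  rw [Option.mem_def] at hy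
  have hyt : y = (i, true) := by
    obtain ⟨y1, y2⟩ := y
    simp only at hc1 hc2
    cases y2
    · simp at hc2
    · rw [← hc1]
  rw [hy, hyt]

lemma inter_eq (i : Fin r) (k : ℕ) :
    ballFree r k ∩ (ballFree r k).image (fun g => FreeGroup.of i * g)
      = Pf r k i ∪ (Nf r k i).image (fun g => FreeGroup.of i * g) := by
  ext h
  simp only [Finset.mem_inter, Finset.mem_image, Finset.mem_union, Pf, Nf, Finset.mem_filter]
  constructor
  · rintro ⟨hB, g, hg, rfl⟩
    by_cases hp : (FreeGroup.of i * g).toWord.head? = some (i, true)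
    · exact Or.inl ⟨hB, hp⟩
    · refine Or.inr ⟨g, ⟨hg, ?_⟩, rfl⟩
      have hgW : g.toWord = (i, false) :: (FreeGroup.of i * g).toWord := by
        have := cons_noncancel (i := i) hp
        rwa [inv_mul_cancel_left] at this
      rw [hgW]; rfl
  · rintro (⟨hB, hp⟩ | ⟨g, ⟨hg, hgp⟩, rfl⟩)
    · refine ⟨hB, ?_⟩
      rcases hW : h.toWord with _ | ⟨x, L⟩
      · rw [hW] at hp; simp at hp
      · rw [hW] at hp
        simp only [List.head?_cons, Option.some_inj] at hp
        subst hp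
        obtain ⟨h1, h2⟩ := decomp_head hW
        refine ⟨FreeGroup.mk L, ?_, by rw [h1]; simp⟩
        rw [mem_ballFree] at hB ⊢
        rw [norm_toWord, h2]
        rw [norm_toWord, hW] at hB
        simp at hB; omega
    · rcases hW : g.toWord with _ | ⟨x, L⟩
      · rw [hW] at hgp; simp at hgp
      · rw [hW] at hgp
        simp only [List.head?_cons, Option.some_inj] at hgp
        subst hgp
        obtain ⟨h1, h2⟩ := decomp_head hW
        simp only [Bool.cond_false] at h1
        have hmk : FreeGroup.of i * g = FreeGroup.mk L := by
          rw [h1, mul_inv_cancel_left]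
        have hmem : FreeGroup.of i * g ∈ ballFree r k := by
          rw [mem_ballFree] at hg ⊢
          rw [hmk, norm_toWord, h2]
          rw [norm_toWord, hW] at hg
          simp at hg; omega
        exact ⟨hmem, g, hg, rfl⟩

lemma disj_PN (i : Fin r) (k : ℕ) :
    Disjoint (Pf r k i) ((Nf r k i).image (fun g => FreeGroup.of i * g)) := by
  rw [Finset.disjoint_left]
  rintro h hP hN
  simp only [Pf, Nf, Finset.mem_filter, Finset.mem_image] at hP hN
  obtain ⟨hB, hp⟩ := hP
  obtain ⟨g, ⟨hgB, hgp⟩, rfl⟩ := hN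
  rcases hW : g.toWord with _ | ⟨x, L⟩
  · rw [hW] at hgp; simp at hgp
  · rw [hW] at hgp
    simp only [List.head?_cons, Option.some_inj] at hgp
    subst hgp
    obtain ⟨h1, h2⟩ := decomp_head hW
    simp only [Bool.cond_false] at h1
    have hmk : FreeGroup.of i * g = FreeGroup.mk L := by rw [h1, mul_inv_cancel_left]
    rw [hmk] at hp
    rw [h2] at hp
    rcases hL : L with _ | ⟨y, t⟩
    · rw [hL] at hp; simp at hp
    · rw [hL] at hp
      simp only [List.head?_cons, Option.some_inj] at hp
      subst hp
      have hred : FreeGroup.reduce ((i, false) :: (i, true) :: t) = (i, false) :: (i, true) :: t := by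
        have := FreeGroup.reduce_toWord g
        rw [hW, hL] at this
        exact this
      exact reduced_no_cancel hred ⟨rfl, rfl⟩

lemma card_inter (i : Fin r) (k : ℕ) :
    (ballFree r k ∩ (ballFree r k).image (fun g => FreeGroup.of i * g)).card
      = (Pf r k i).card + (Nf r k i).card := by
  rw [inter_eq, Finset.card_union_of_disjoint (disj_PN i k),
    Finset.card_image_of_injective _ (mul_right_injective (FreeGroup.of i))]

lemma card_erase (k : ℕ) :
    ((ballFree r k).erase 1).card = ∑ i : Fin r, ((Pf r k i).card + (Nf r k i).card) := by
  have he : (ballFree r k).erase 1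
      = Finset.univ.biUnion (fun p : Fin r × Bool =>
          (ballFree r k).filter (fun g => g.toWord.head? = some p)) := by
    ext g
    simp only [Finset.mem_erase, Finset.mem_biUnion, Finset.mem_univ, Finset.mem_filter, true_and]
    constructor
    · rintro ⟨hne, hB⟩
      rcases hW : g.toWord with _ | ⟨x, L⟩
      · exact absurd (FreeGroup.toWord_eq_nil_iff.1 hW) hne
      · exact ⟨x, hB, by simp [hW]⟩
    · rintro ⟨p, hB, hp⟩
      refine ⟨?_, hB⟩
      intro h1
      rw [h1] at hp
      simp [FreeGroup.toWord_one] at hp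
  rw [he, Finset.card_biUnion, Fintype.sum_prod_type]
  · refine Finset.sum_congr rfl fun i _ => ?_
    rw [Fintype.sum_bool]
    simp only [Pf, Nf]
  · intro p _ q _ hpq
    rw [Function.onFun, Finset.disjoint_left]
    rintro g hg1 hg2
    simp only [Finset.mem_filter] at hg1 hg2
    exact hpq (by rw [← Option.some_inj, ← hg1.2, hg2.2])

lemma card_key (k : ℕ) :
    (∑ i : Fin r, (ballFree r k ∩ (ballFree r k).image
        (fun g => FreeGroup.of i * g)).card) + 1 = (ballFree r k).card := by
  have h1 := card_erase (r := r) k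
  have h2 : ((ballFree r k).erase 1).card = (ballFree r k).card - 1 :=
    Finset.card_erase_of_mem one_mem_ballFree
  have h3 : 1 ≤ (ballFree r k).card := Finset.card_pos.2 ⟨1, one_mem_ballFree⟩
  have h4 : ∑ i : Fin r, (ballFree r k ∩ (ballFree r k).image
      (fun g => FreeGroup.of i * g)).card = ∑ i : Fin r, ((Pf r k i).card + (Nf r k i).card) :=
    Finset.sum_congr rfl fun i _ => card_inter i k
  omega

lemma ballUnion_eq (i : Fin r) (k : ℕ) :
    ballUnion r i k = ballFree r k ∪ (ballFree r k).image (fun g => FreeGroup.of i * g) := by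
  ext g
  unfold ballUnion
  simp only [Finset.mem_union, Finset.mem_image]

lemma card_ballUnion (i : Fin r) (k : ℕ) :
    (ballUnion r i k).card
      + (ballFree r k ∩ (ballFree r k).image (fun g => FreeGroup.of i * g)).card
      = 2 * (ballFree r k).card := by
  rw [ballUnion_eq, Finset.card_union_add_card_inter,
    Finset.card_image_of_injective _ (mul_right_injective (FreeGroup.of i))]
  omega

end BowenAux

namespace BowenAux2
open Real
variable {K : Type*} [Fintype K]

lemma sum_prod_pow (a : K → ℝ) : ∀ n : ℕ,
    ∑ y : Fin n → K, ∏ g, a (y g) = (∑ m, a m) ^ n := by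
  intro n
  induction n with
  | zero => simp
  | succ n ih =>
    rw [← Equiv.sum_comp (Fin.consEquiv (fun _ : Fin (n+1) => K)) fun y => ∏ g, a (y g),
      Fintype.sum_prod_type]
    simp only [Fin.consEquiv_apply]
    have hsplit : ∀ (m : K) (z : Fin n → K),
        ∏ g : Fin (n+1), a ((Fin.cons m z : Fin (n+1) → K) g) = a m * ∏ g : Fin n, a (z g) := by
      intro m z
      rw [Fin.prod_univ_succ]
      simp
    simp only [hsplit]
    rw [← Finset.sum_mul_sum]
    rw [ih, pow_succ]
    ring

lemma sum_negMulLog_prod (a : K → ℝ) (hsum : ∑ m, a m = 1) : ∀ n : ℕ,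
    ∑ y : Fin n → K, negMulLog (∏ g, a (y g))
      = n * ∑ m, negMulLog (a m) := by
  intro n
  induction n with
  | zero => simp
  | succ n ih =>
    rw [← Equiv.sum_comp (Fin.consEquiv (fun _ : Fin (n+1) => K))
      fun y => negMulLog (∏ g, a (y g)), Fintype.sum_prod_type]
    simp only [Fin.consEquiv_apply]
    have hsplit : ∀ (m : K) (z : Fin n → K),
        ∏ g : Fin (n+1), a ((Fin.cons m z : Fin (n+1) → K) g) = a m * ∏ g : Fin n, a (z g) := by
      intro m z
      rw [Fin.prod_univ_succ]
      simp
    simp only [hsplit, negMulLog_mul]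
    have h1 : ∀ m : K, ∑ z : Fin n → K,
        ((∏ g, a (z g)) * negMulLog (a m) + a m * negMulLog (∏ g, a (z g)))
        = negMulLog (a m) + a m * (n * ∑ m, negMulLog (a m)) := by
      intro m
      rw [Finset.sum_add_distrib, ← Finset.sum_mul, sum_prod_pow a n, hsum, one_pow,
        ← Finset.mul_sum, ih]
      ring
    simp only [h1]
    rw [Finset.sum_add_distrib, ← Finset.sum_mul, hsum]
    push_cast
    ring

lemma sum_negMulLog_prod' {ι : Type*} [Fintype ι] [DecidableEq ι] (a : K → ℝ) (hsum : ∑ m, a m = 1) :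
    ∑ y : ι → K, negMulLog (∏ g, a (y g))
      = (Fintype.card ι) * ∑ m, negMulLog (a m) := by
  obtain ⟨e0⟩ := Fintype.truncEquivFin ι
  rw [← sum_negMulLog_prod a hsum (Fintype.card ι)]
  refine Fintype.sum_equiv (e0.arrowCongr (Equiv.refl K))
    (fun y => negMulLog (∏ g, a (y g))) (fun z => negMulLog (∏ g, a (z g)))
    (fun y => ?_)
  exact congrArg Real.negMulLog <| Fintype.prod_equiv e0 (fun g => a (y g))
    (fun j => a ((e0.arrowCongr (Equiv.refl K) y) j)) (fun g => by simp)

end BowenAux2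


open Real MeasureTheory in
lemma BowenAux.entropy_cylinder {r : ℕ} {K : Type*} [Fintype K] [MeasurableSpace K]
    [MeasurableSingletonClass K] (κ : Measure K) [IsProbabilityMeasure κ]
    (μ : Measure (FreeGroup (Fin r) → K))
    (hcyl : ∀ (F : Finset (FreeGroup (Fin r))) (y : FreeGroup (Fin r) → K),
      μ {x | ∀ g ∈ F, x g = y g} = ∏ g ∈ F, κ {y g})
    (F : Finset (FreeGroup (Fin r))) :
    Bowen.entropy μ (fun (x : FreeGroup (Fin r) → K) (g : {g // g ∈ F}) => x g.1)
      = F.card * ∑ m : K, negMulLog (κ {m}).toReal := by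
  classical
  have hK : Nonempty K := by
    by_contra h
    rw [not_nonempty_iff] at h
    have h1 : κ Set.univ = 1 := measure_univ
    rw [Set.univ_eq_empty_iff.2 h] at h1
    simp at h1
  have hsum : ∑ m : K, (κ {m}).toReal = 1 := by
    have h1 : ∑ m ∈ Finset.univ, κ ({m} : Set K) = κ Set.univ := by
      rw [← measure_biUnion_finset (f := fun m : K => ({m} : Set K))
        (fun a _ b _ hab => by simp [Set.disjoint_singleton, hab])
        (fun b _ => measurableSet_singleton b)]
      congr 1
      ext m
      simp
    have h2 : ∑ m : K, (κ {m}).toReal = (∑ m ∈ Finset.univ, κ {m}).toReal :=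
      (ENNReal.toReal_sum fun m _ => measure_ne_top κ _).symm
    rw [h2, h1]
    simp
  have hfib : ∀ y : {g // g ∈ F} → K,
      μ ((fun (x : FreeGroup (Fin r) → K) (g : {g // g ∈ F}) => x g.1) ⁻¹' {y}) = ∏ g : {g // g ∈ F}, κ {y g} := by
    intro y
    set Y : FreeGroup (Fin r) → K :=
      fun g => if h : g ∈ F then y ⟨g, h⟩ else Classical.arbitrary K with hY
    have hset : (fun (x : FreeGroup (Fin r) → K) (g : {g // g ∈ F}) => x g.1) ⁻¹' {y}
        = {x | ∀ g ∈ F, x g = Y g} := by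
      ext x
      simp only [Set.mem_preimage, Set.mem_singleton_iff, funext_iff, Set.mem_setOf_eq]
      constructor
      · intro hx g hg
        have := hx ⟨g, hg⟩
        simpa [hY, dif_pos hg] using this
      · intro hx g
        have := hx g.1 g.2
        simpa [hY, dif_pos g.2] using this
    rw [hset, hcyl F Y, ← Finset.prod_attach F (fun g => κ {Y g}), Finset.univ_eq_attach]
    refine Finset.prod_congr rfl fun g _ => ?_
    congr 1
    simp [hY, dif_pos g.2]
  rw [Bowen.entropy, tsum_fintype]
  have hterm : ∀ y : {g // g ∈ F} → K,
      negMulLog (μ ((fun (x : FreeGroup (Fin r) → K) (g : {g // g ∈ F}) => x g.1) ⁻¹' {y})).toReal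
        = negMulLog (∏ g : {g // g ∈ F}, (κ {y g}).toReal) := by
    intro y
    rw [hfib y, ENNReal.toReal_prod]
  calc ∑ y : {g // g ∈ F} → K,
        negMulLog (μ ((fun (x : FreeGroup (Fin r) → K) (g : {g // g ∈ F}) => x g.1) ⁻¹' {y})).toReal
      = ∑ y : {g // g ∈ F} → K, negMulLog (∏ g, (κ {y g}).toReal) :=
        Finset.sum_congr rfl fun y _ => hterm y
    _ = (Fintype.card {g // g ∈ F}) * ∑ m : K, negMulLog (κ {m}).toReal :=
        BowenAux2.sum_negMulLog_prod' (fun m => (κ {m}).toReal) hsum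
    _ = F.card * ∑ m : K, negMulLog (κ {m}).toReal := by rw [Fintype.card_coe]


/-- Theorem 5.2: for the Bernoulli shift `(G, K^G, κ^G)` over the rank `r`
free group with Bernoulli partition `α`, `F(α^k) = H(κ)` for every `k ≥ 0`, and
consequently `f(G, K^G, κ^G) = inf_k F(α^k) = H(κ)`.  (The product measure `κ^G` is
characterized by its values on cylinder sets.) -/
theorem f_invariant_bernoulli {r : ℕ} {K : Type*} [Fintype K] [MeasurableSpace K]
    [MeasurableSingletonClass K] (κ : Measure K) [IsProbabilityMeasure κ]
    (μ : Measure (FreeGroup (Fin r) → K))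
    (hcyl : ∀ (F : Finset (FreeGroup (Fin r))) (y : FreeGroup (Fin r) → K),
      μ {x | ∀ g ∈ F, x g = y g} = ∏ g ∈ F, κ {y g}) :
    (∀ k : ℕ, FBern r μ k = ∑' m : K, Real.negMulLog (κ {m}).toReal) ∧
    (⨅ k : ℕ, (FBern r μ k : EReal))
      = ((∑' m : K, Real.negMulLog (κ {m}).toReal : ℝ) : EReal) := by
  classical
  have htsum : (∑' m : K, Real.negMulLog (κ {m}).toReal)
      = ∑ m : K, Real.negMulLog (κ {m}).toReal := tsum_fintype _
  set H : ℝ := ∑ m : K, Real.negMulLog (κ {m}).toReal with hH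
  have hk : ∀ k : ℕ, FBern r μ k = H := by
    intro k
    rw [FBern, BowenAux.entropy_cylinder κ μ hcyl]
    have hU : ∀ i : Fin r,
        Bowen.entropy μ (fun x (g : {g // g ∈ ballUnion r i k}) => x g.1)
          = (ballUnion r i k).card * H :=
      fun i => BowenAux.entropy_cylinder κ μ hcyl (ballUnion r i k)
    rw [Finset.sum_congr rfl fun i _ => hU i, ← Finset.sum_mul]
    set B : ℝ := ((ballFree r k).card : ℝ) with hB
    have h2 : ∀ i : Fin r, ((ballUnion r i k).card : ℝ)
        = 2 * B - ((ballFree r k ∩ (ballFree r k).image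
            (fun g => FreeGroup.of i * g)).card : ℝ) := by
      intro i
      have := BowenAux.card_ballUnion i k
      have := congrArg (fun n : ℕ => (n : ℝ)) this
      push_cast at this
      linarith
    have h3 : (∑ i : Fin r, ((ballFree r k ∩ (ballFree r k).image
        (fun g => FreeGroup.of i * g)).card : ℝ)) = B - 1 := by
      have := BowenAux.card_key (r := r) k
      have := congrArg (fun n : ℕ => (n : ℝ)) this
      push_cast at this
      linarith
    have h4 : (∑ i : Fin r, ((ballUnion r i k).card : ℝ))
        = 2 * r * B - (B - 1) := by
      rw [Finset.sum_congr rfl fun i _ => h2 i, Finset.sum_sub_distrib, h3,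
        Finset.sum_const, Finset.card_univ, Fintype.card_fin, nsmul_eq_mul]
      ring
    rw [h4]
    ring
  refine ⟨fun k => by rw [hk k, htsum], ?_⟩
  have : ∀ k : ℕ, ((FBern r μ k : ℝ) : EReal) = ((H : ℝ) : EReal) := fun k => by rw [hk k]
  rw [iInf_congr this, iInf_const, htsum]
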